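/- For the N = t scheme where node i receives Ã_i = A + R̃_i and B̃_i = B + S̃_i with (R̃_i), (S̃_i) zero-mean noise independent of (A,B) and of each other, any linear decoder C̃ = Σ w_i Ã_i B̃_i satisfies E[(C̃ − AB)²] ≥ E[(Σ w_i Ã_i B − AB)²] ≥ η²/(1 + SNR_p), where η = E[A²] = E[B²] and SNR_p bounds the achievable SNR for estimating A from (Ã_i)_{i=1}^N. -/

import Mathlib

open MeasureTheory ProbabilityTheory

section Aux
variable {Ω : Type*} [MeasurableSpace Ω] {μ : Measure Ω} [IsProbabilityMeasure μ]

private lemma half_eq4 : (2:ENNReal)⁻¹ = 4⁻¹ + 4⁻¹ := by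
  rw [← two_mul, show (4:ENNReal) = 2*2 by norm_num, ENNReal.mul_inv (by norm_num) (by norm_num)]
  rw [← mul_assoc, ENNReal.mul_inv_cancel (by norm_num) (by norm_num), one_mul]

private lemma memL2_mul {f g : Ω → ℝ} (hf : MemLp f 4 μ) (hg : MemLp g 4 μ) :
    MemLp (fun ω => f ω * g ω) 2 μ := by
  have h := MemLp.smul (f := g) (φ := f) hg hf
    (hpqr := ⟨half_eq4.symm⟩)
  exact h

private lemma integrable_mul_L2 {f g : Ω → ℝ} (hf : MemLp f 2 μ) (hg : MemLp g 2 μ) :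
    Integrable (fun ω => f ω * g ω) μ := by
  have h := MemLp.smul (f := g) (φ := f) hg hf
    (hpqr := ⟨by rw [inv_one]; exact ENNReal.inv_two_add_inv_two⟩)
  rw [← memLp_one_iff_integrable]
  exact h

/-- If the cross term vanishes, adding `G` can only increase the second moment. -/
private lemma key_ineq {F G : Ω → ℝ} (hF2 : MemLp F 2 μ) (hG2 : MemLp G 2 μ)
    (hFG : ∫ ω, F ω * G ω ∂μ = 0) :
    ∫ ω, F ω ^ 2 ∂μ ≤ ∫ ω, (F ω + G ω) ^ 2 ∂μ := by
  have iFF : Integrable (fun ω => F ω * F ω) μ := integrable_mul_L2 hF2 hF2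
  have iGG : Integrable (fun ω => G ω * G ω) μ := integrable_mul_L2 hG2 hG2
  have iFG : Integrable (fun ω => F ω * G ω) μ := integrable_mul_L2 hF2 hG2
  have h1 : ∫ ω, (F ω + G ω) ^ 2 ∂μ
      = ∫ ω, (F ω * F ω + (2 * (F ω * G ω) + G ω * G ω)) ∂μ :=
    integral_congr_ae (Filter.Eventually.of_forall fun ω => by ring)
  have i3 : Integrable (fun ω => 2 * (F ω * G ω)) μ := iFG.const_mul 2
  have i2 : Integrable (fun ω => 2 * (F ω * G ω) + G ω * G ω) μ := i3.add iGG
  have h2 : ∫ ω, (F ω * F ω + (2 * (F ω * G ω) + G ω * G ω)) ∂μ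
      = (∫ ω, F ω * F ω ∂μ) + ((∫ ω, 2 * (F ω * G ω) ∂μ) + ∫ ω, G ω * G ω ∂μ) := by
    rw [integral_add iFF i2, integral_add i3 iGG]
  have h3 : ∫ ω, 2 * (F ω * G ω) ∂μ = 0 := by
    rw [integral_const_mul, hFG, mul_zero]
  have h4 : 0 ≤ ∫ ω, G ω * G ω ∂μ :=
    integral_nonneg fun ω => mul_self_nonneg _
  have h5 : ∫ ω, F ω ^ 2 ∂μ = ∫ ω, F ω * F ω ∂μ :=
    integral_congr_ae (Filter.Eventually.of_forall fun ω => by ring)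
  rw [h1, h2, h3, h5]
  linarith

end Aux

/-- `N = t` lower bound: with `Ã_i = A + R̃_i`, `B̃_i = B + S̃_i`, any linear decoder
`C̃ = Σ wᵢ Ãᵢ B̃ᵢ` satisfies
`E[(C̃ − AB)²] ≥ E[(Σ wᵢ Ãᵢ B − AB)²] ≥ η²/(1 + SNR_p)`. -/
theorem stmt_8 {Ω : Type*} [MeasurableSpace Ω] (μ : Measure Ω) [IsProbabilityMeasure μ]
    {N : ℕ} (A B : Ω → ℝ) (R S : Fin N → Ω → ℝ) (η snrp : ℝ)
    (hη : 0 < η) (hsnrp : 0 ≤ snrp)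
    (hAmeas : Measurable A) (hBmeas : Measurable B)
    (hRmeas : ∀ i, Measurable (R i)) (hSmeas : ∀ i, Measurable (S i))
    (hA4 : MemLp A 4 μ) (hB4 : MemLp B 4 μ)
    (hR4 : ∀ i, MemLp (R i) 4 μ) (hS4 : ∀ i, MemLp (S i) 4 μ)
    (hAB : IndepFun A B μ)
    (hB_indep : IndepFun (fun ω => (A ω, fun i => R i ω)) B μ)
    (hS_indep : IndepFun (fun ω => (A ω, B ω, fun i => R i ω)) (fun ω i => S i ω) μ)
    (hAmean : ∫ ω, A ω ∂μ = 0) (hBmean : ∫ ω, B ω ∂μ = 0)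
    (hA2 : ∫ ω, (A ω) ^ 2 ∂μ = η) (hB2 : ∫ ω, (B ω) ^ 2 ∂μ = η)
    (hRmean : ∀ i, ∫ ω, R i ω ∂μ = 0) (hSmean : ∀ i, ∫ ω, S i ω ∂μ = 0)
    (hSNR : ∀ w : Fin N → ℝ,
      η / (1 + snrp) ≤ ∫ ω, ((∑ i, w i * (A ω + R i ω)) - A ω) ^ 2 ∂μ) :
    ∀ w : Fin N → ℝ,
      (∫ ω, ((∑ i, w i * (A ω + R i ω) * B ω) - A ω * B ω) ^ 2 ∂μ
        ≤ ∫ ω, ((∑ i, w i * (A ω + R i ω) * (B ω + S i ω)) - A ω * B ω) ^ 2 ∂μ) ∧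
      η ^ 2 / (1 + snrp)
        ≤ ∫ ω, ((∑ i, w i * (A ω + R i ω) * B ω) - A ω * B ω) ^ 2 ∂μ := by
  intro w
  have h1pos : (0:ℝ) < 1 + snrp := by linarith
  -- basic Memℒp facts
  have hX4 : ∀ i, MemLp (fun ω => A ω + R i ω) 4 μ := fun i => hA4.add (hR4 i)
  have hT4 : MemLp (fun ω => (∑ i, w i * (A ω + R i ω)) - A ω) 4 μ := by
    have hsum : MemLp (fun ω => ∑ i, w i * (A ω + R i ω)) 4 μ :=
      memLp_finset_sum (f := fun i ω => w i * (A ω + R i ω)) Finset.univ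
        (fun i _ => (hX4 i).const_mul (w i))
    exact hsum.sub hA4
  have hFT : ∀ ω, ((∑ i, w i * (A ω + R i ω) * B ω) - A ω * B ω)
      = ((∑ i, w i * (A ω + R i ω)) - A ω) * B ω := by
    intro ω; rw [sub_mul, Finset.sum_mul]
  have hF2 : MemLp (fun ω => (∑ i, w i * (A ω + R i ω) * B ω) - A ω * B ω) 2 μ := by
    have h := memL2_mul hT4 hB4
    have e : (fun ω => (∑ i, w i * (A ω + R i ω) * B ω) - A ω * B ω)
        = fun ω => ((∑ i, w i * (A ω + R i ω)) - A ω) * B ω := funext hFT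
    rw [e]; exact h
  have hG2 : MemLp (fun ω => ∑ i, w i * (A ω + R i ω) * S i ω) 2 μ :=
    memLp_finset_sum (f := fun i ω => w i * (A ω + R i ω) * S i ω) Finset.univ
      (fun i _ => memL2_mul ((hX4 i).const_mul (w i)) (hS4 i))
  -- cross term vanishes
  have hcross : ∫ ω, ((∑ i, w i * (A ω + R i ω) * B ω) - A ω * B ω)
      * (∑ i, w i * (A ω + R i ω) * S i ω) ∂μ = 0 := by
    have hpt : ∀ ω, ((∑ i, w i * (A ω + R i ω) * B ω) - A ω * B ω)
        * (∑ i, w i * (A ω + R i ω) * S i ω)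
        = ∑ i, w i * ((((∑ j, w j * (A ω + R j ω) * B ω) - A ω * B ω) * (A ω + R i ω))
            * S i ω) := by
      intro ω
      rw [Finset.mul_sum]
      exact Finset.sum_congr rfl fun i _ => by ring
    rw [integral_congr_ae (Filter.Eventually.of_forall hpt)]
    rw [integral_finset_sum Finset.univ (fun i _ => ?_)]
    · apply Finset.sum_eq_zero
      intro i _
      rw [integral_const_mul]
      have hind : IndepFun
          (fun ω => (((∑ j, w j * (A ω + R j ω) * B ω) - A ω * B ω) * (A ω + R i ω)))
          (S i) μ := by
        have hφ : Measurable (fun p : ℝ × ℝ × (Fin N → ℝ) =>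
            ((∑ j, w j * (p.1 + p.2.2 j) * p.2.1) - p.1 * p.2.1) * (p.1 + p.2.2 i)) := by
          fun_prop
        exact hS_indep.comp hφ (measurable_pi_apply i)
      have a1 : AEStronglyMeasurable
          (fun ω => (((∑ j, w j * (A ω + R j ω) * B ω) - A ω * B ω) * (A ω + R i ω))) μ :=
        (hF2.aestronglyMeasurable.mul (hX4 i).aestronglyMeasurable)
      rw [hind.integral_fun_mul_eq_mul_integral a1 (hSmeas i).aestronglyMeasurable, hSmean i, mul_zero, mul_zero]
    · have h1 : Integrable (fun ω =>
          (((∑ j, w j * (A ω + R j ω) * B ω) - A ω * B ω) * ((A ω + R i ω) * S i ω))) μ :=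
        integrable_mul_L2 hF2 (memL2_mul (hX4 i) (hS4 i))
      have h2 := h1.const_mul (w i)
      refine h2.congr (Filter.Eventually.of_forall fun ω => by ring)
  constructor
  · -- part 1
    have hle := key_ineq hF2 hG2 hcross
    have heq2 : ∀ ω : Ω, ((∑ i, w i * (A ω + R i ω) * (B ω + S i ω)) - A ω * B ω)
        = ((∑ i, w i * (A ω + R i ω) * B ω) - A ω * B ω)
          + ∑ i, w i * (A ω + R i ω) * S i ω := by
      intro ω
      have h : ∑ i, w i * (A ω + R i ω) * (B ω + S i ω)
          = ∑ i, (w i * (A ω + R i ω) * B ω + w i * (A ω + R i ω) * S i ω) :=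
        Finset.sum_congr rfl fun i _ => by ring
      rw [h, Finset.sum_add_distrib]
      ring
    refine hle.trans (le_of_eq (integral_congr_ae
      (Filter.Eventually.of_forall fun ω => by simp only [heq2])))
  · -- part 2
    have hind2 : IndepFun (fun ω => ((∑ i, w i * (A ω + R i ω)) - A ω) ^ 2)
        (fun ω => B ω ^ 2) μ := by
      have hφ : Measurable (fun p : ℝ × (Fin N → ℝ) => ((∑ j, w j * (p.1 + p.2 j)) - p.1) ^ 2) :=
        by fun_prop
      exact hB_indep.comp hφ (measurable_id.pow_const 2)
    have hTmeas : Measurable (fun ω => (∑ i, w i * (A ω + R i ω)) - A ω) := by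
      apply Measurable.sub _ hAmeas
      exact Finset.measurable_sum Finset.univ fun i _ => ((hAmeas.add (hRmeas i)).const_mul (w i))
    have heq : ∫ ω, ((∑ i, w i * (A ω + R i ω) * B ω) - A ω * B ω) ^ 2 ∂μ
        = (∫ ω, ((∑ i, w i * (A ω + R i ω)) - A ω) ^ 2 ∂μ) * ∫ ω, B ω ^ 2 ∂μ := by
      have step : ∫ ω, ((∑ i, w i * (A ω + R i ω) * B ω) - A ω * B ω) ^ 2 ∂μ
          = ∫ ω, ((∑ i, w i * (A ω + R i ω)) - A ω) ^ 2 * B ω ^ 2 ∂μ :=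
        integral_congr_ae (Filter.Eventually.of_forall fun ω => by simp only [hFT]; ring)
      rw [step]
      exact hind2.integral_fun_mul_eq_mul_integral ((hTmeas.pow_const 2).aestronglyMeasurable)
        ((hBmeas.pow_const 2).aestronglyMeasurable)
    rw [heq, hB2]
    have hmul := mul_le_mul_of_nonneg_right (hSNR w) hη.le
    calc η ^ 2 / (1 + snrp) = η / (1 + snrp) * η := by ring
      _ ≤ _ := hmul
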